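/- Let A ∈ ℝ^{m×np} and Q = A^T A ∈ ℝ^{np×np} with column blocks Q = [Q₁,…,Q_p], Q_j ∈ ℝ^{np×n}. Fix s ≥ 1 and η ≥ 0, and let z ∈ ℝ^{np} satisfy ‖A^T A z‖_{b∞} ≤ 1 and ‖z‖_{b1} ≤ sη. Then for every index i ∈ {1,…,p} and every matrix P_i ∈ ℝ^{np×n}, partitioned into row blocks P_i^1,…,P_i^p with each P_i^l ∈ ℝ^{n×n}, the i-th block of z satisfies ‖z_i‖₂ ≤ sη · max_{1≤j≤p} ‖δ_{ij} I_n − P_iᵀ Q_j‖₂ + Σ_{l=1}^p ‖P_i^l‖₂, where ‖·‖₂ on matrices is the spectral norm. Consequently, f_s(η) := sup{‖z‖_{b∞} : ‖A^T A z‖_{b∞} ≤ 1, ‖z‖_{b1} ≤ sη} ≤ max_i inf_{P_i} ( sη · max_j ‖δ_{ij} I_n − P_iᵀ Q_j‖₂ + Σ_{l=1}^p ‖P_i^l‖₂ ). -/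

import Mathlib

open MeasureTheory ProbabilityTheory Finset Matrix

/-- Euclidean norm of a finitely-indexed real vector. -/
noncomputable def vnorm {ι : Type*} [Fintype ι] (v : ι → ℝ) : ℝ :=
  Real.sqrt (∑ i, (v i) ^ 2)

/-- Euclidean norm of the `i`-th block of `x ∈ ℝ^{np}` (blocks indexed by `Fin p`). -/
noncomputable def bnorm {n p : ℕ} (x : Fin p × Fin n → ℝ) (i : Fin p) : ℝ :=
  vnorm (fun j => x (i, j))

/-- Block-ℓ1 norm: `‖x‖_{b1} = ∑ i, ‖x_i‖₂`. -/
noncomputable def bl1 {n p : ℕ} (x : Fin p × Fin n → ℝ) : ℝ :=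
  ∑ i, bnorm x i

/-- Block-ℓ∞ norm: `‖x‖_{b∞} = max_i ‖x_i‖₂`. -/
noncomputable def blinf {n p : ℕ} (x : Fin p × Fin n → ℝ) : ℝ :=
  ⨆ i, bnorm x i

open scoped Classical in
/-- Block support: indices of nonzero blocks. -/
noncomputable def bsupp {n p : ℕ} (x : Fin p × Fin n → ℝ) : Finset (Fin p) :=
  Finset.univ.filter (fun i => ∃ j, x (i, j) ≠ 0)

/-- `ω₂(A,s) = inf { ‖Az‖₂ / ‖z‖_{b∞} : z ≠ 0, ‖z‖_{b1} ≤ s ‖z‖_{b∞} }`. -/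
noncomputable def omega2 {m n p : ℕ} (A : Matrix (Fin m) (Fin p × Fin n) ℝ) (s : ℝ) : ℝ :=
  sInf {r | ∃ z : Fin p × Fin n → ℝ, z ≠ 0 ∧ bl1 z ≤ s * blinf z ∧
    r = vnorm (A.mulVec z) / blinf z}

/-- `ω_{b∞}(AᵀA,s) = inf { ‖AᵀAz‖_{b∞} / ‖z‖_{b∞} : z ≠ 0, ‖z‖_{b1} ≤ s ‖z‖_{b∞} }`. -/
noncomputable def omegaBInf {m n p : ℕ} (A : Matrix (Fin m) (Fin p × Fin n) ℝ) (s : ℝ) : ℝ :=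
  sInf {r | ∃ z : Fin p × Fin n → ℝ, z ≠ 0 ∧ bl1 z ≤ s * blinf z ∧
    r = blinf ((Aᵀ * A).mulVec z) / blinf z}

/-- Block ℓ1-constrained minimal singular value
`ρ_s(A) = inf { ‖Az‖₂ / ‖z‖₂ : z ≠ 0, ‖z‖_{b1}² ≤ s ‖z‖₂² }`. -/
noncomputable def rhoCMSV {m n p : ℕ} (A : Matrix (Fin m) (Fin p × Fin n) ℝ) (s : ℝ) : ℝ :=
  sInf {r | ∃ z : Fin p × Fin n → ℝ, z ≠ 0 ∧ (bl1 z) ^ 2 ≤ s * (vnorm z) ^ 2 ∧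
    r = vnorm (A.mulVec z) / vnorm z}

/-- Spectral norm (largest singular value) of a real matrix, as the ℓ2→ℓ2 operator norm. -/
noncomputable def specNorm {ι κ : Type*} [Fintype ι] [Fintype κ] (M : Matrix ι κ ℝ) : ℝ :=
  sSup {r | ∃ v : κ → ℝ, vnorm v ≤ 1 ∧ r = vnorm (M.mulVec v)}

/-- The `j`-th column block (of `n` columns) of a matrix with `np` columns. -/
def colBlock {ι : Type*} {n p : ℕ} (Q : Matrix ι (Fin p × Fin n) ℝ) (j : Fin p) :
    Matrix ι (Fin n) ℝ := Matrix.of fun r c => Q r (j, c)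

/-- The `l`-th row block (of `n` rows) of a matrix with `np` rows. -/
def rowBlock {κ : Type*} {n p : ℕ} (P : Matrix (Fin p × Fin n) κ ℝ) (l : Fin p) :
    Matrix (Fin n) κ ℝ := Matrix.of fun r c => P (l, r) c

/-- `δ_{ij} Iₙ`. -/
def deltaId (n : ℕ) {p : ℕ} (i j : Fin p) : Matrix (Fin n) (Fin n) ℝ :=
  if i = j then 1 else 0

/-- Orlicz ψ₂ norm of a scalar random variable. -/
noncomputable def psi2 {Ω : Type*} [MeasurableSpace Ω] (μ : Measure Ω) (Y : Ω → ℝ) : ℝ :=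
  sInf {t | 0 < t ∧ ∫ ω, Real.exp ((Y ω) ^ 2 / t ^ 2) ∂μ ≤ 2}


section AuxLemmas

lemma vnorm_eq' {ι : Type*} [Fintype ι] (v : ι → ℝ) :
    vnorm v = ‖(WithLp.equiv 2 (ι → ℝ)).symm v‖ := by
  rw [EuclideanSpace.norm_eq]
  simp [vnorm, sq_abs]

lemma vnorm_nonneg' {ι : Type*} [Fintype ι] (v : ι → ℝ) : 0 ≤ vnorm v := Real.sqrt_nonneg _

lemma vnorm_add_le' {ι : Type*} [Fintype ι] (u v : ι → ℝ) :
    vnorm (u + v) ≤ vnorm u + vnorm v := by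
  rw [vnorm_eq', vnorm_eq', vnorm_eq']
  exact norm_add_le ((WithLp.equiv 2 (ι → ℝ)).symm u) ((WithLp.equiv 2 (ι → ℝ)).symm v)

lemma vnorm_sum_le' {ι κ : Type*} [Fintype ι] [Fintype κ] (f : κ → ι → ℝ) :
    vnorm (∑ k, f k) ≤ ∑ k, vnorm (f k) := by
  simp only [vnorm_eq']
  exact (norm_sum_le Finset.univ (fun k => (WithLp.equiv 2 (ι → ℝ)).symm (f k))).trans_eq' (by
    congr 1; exact (map_sum (WithLp.linearEquiv 2 ℝ (ι → ℝ)).symm f Finset.univ).symm)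

lemma vnorm_smul' {ι : Type*} [Fintype ι] (c : ℝ) (v : ι → ℝ) :
    vnorm (c • v) = |c| * vnorm v := by
  rw [vnorm_eq', vnorm_eq']
  rw [show (WithLp.equiv 2 (ι → ℝ)).symm (c • v) = c • (WithLp.equiv 2 (ι → ℝ)).symm v from rfl]
  rw [norm_smul]; simp

lemma vnorm_eq_zero' {ι : Type*} [Fintype ι] {v : ι → ℝ} (h : vnorm v = 0) : v = 0 := by
  rw [vnorm_eq', norm_eq_zero] at h
  exact (WithLp.equiv 2 (ι → ℝ)).symm.injective (by simpa using h)

lemma dot_le_vnorm' {ι : Type*} [Fintype ι] (u v : ι → ℝ) :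
    dotProduct u v ≤ vnorm u * vnorm v := by
  have := real_inner_le_norm ((WithLp.equiv 2 (ι → ℝ)).symm u) ((WithLp.equiv 2 (ι → ℝ)).symm v)
  rw [PiLp.inner_apply] at this
  simpa [vnorm_eq', dotProduct, mul_comm] using this

lemma abs_dot_le_vnorm' {ι : Type*} [Fintype ι] (u v : ι → ℝ) :
    |dotProduct u v| ≤ vnorm u * vnorm v := by
  have := abs_real_inner_le_norm ((WithLp.equiv 2 (ι → ℝ)).symm u)
    ((WithLp.equiv 2 (ι → ℝ)).symm v)
  rw [PiLp.inner_apply] at this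
  simpa [vnorm_eq', dotProduct, mul_comm] using this

lemma vnorm_zero' {ι : Type*} [Fintype ι] : vnorm (0 : ι → ℝ) = 0 := by
  simp [vnorm]

lemma vnorm_single' {ι : Type*} [Fintype ι] [DecidableEq ι] (i : ι) (a : ℝ) :
    vnorm (Pi.single i a) = |a| := by
  simp only [vnorm, Pi.single_apply]
  rw [Finset.sum_eq_single i]
  · simp [Real.sqrt_sq_eq_abs]
  · intro b _ hb; simp [hb]
  · simp

lemma vnorm_le_sum_abs' {ι : Type*} [Fintype ι] (v : ι → ℝ) : vnorm v ≤ ∑ i, |v i| := by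
  classical
  have h : v = ∑ i, Pi.single i (v i) := by
    rw [Finset.univ_sum_single]
  calc vnorm v = vnorm (∑ i, Pi.single i (v i)) := by rw [← h]
    _ ≤ ∑ i, vnorm (Pi.single i (v i)) := vnorm_sum_le' _
    _ = ∑ i, |v i| := by simp [vnorm_single']

lemma specNorm_mem_zero' {ι κ : Type*} [Fintype ι] [Fintype κ] (M : Matrix ι κ ℝ) :
    (0:ℝ) ∈ {r | ∃ v : κ → ℝ, vnorm v ≤ 1 ∧ r = vnorm (M.mulVec v)} :=
  ⟨0, by simp [vnorm_zero'], by simp [vnorm_zero']⟩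

lemma specNorm_bddAbove' {ι κ : Type*} [Fintype ι] [Fintype κ] (M : Matrix ι κ ℝ) :
    BddAbove {r | ∃ v : κ → ℝ, vnorm v ≤ 1 ∧ r = vnorm (M.mulVec v)} := by
  refine ⟨∑ i, vnorm (fun c => M i c), ?_⟩
  rintro r ⟨v, hv, rfl⟩
  calc vnorm (M.mulVec v) ≤ ∑ i, |M.mulVec v i| := vnorm_le_sum_abs' _
    _ ≤ ∑ i, vnorm (fun c => M i c) := by
        refine Finset.sum_le_sum fun i _ => ?_
        calc |M.mulVec v i| = |dotProduct (fun c => M i c) v| := rfl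
          _ ≤ vnorm (fun c => M i c) * vnorm v := abs_dot_le_vnorm' _ _
          _ ≤ vnorm (fun c => M i c) * 1 :=
              mul_le_mul_of_nonneg_left hv (vnorm_nonneg' _)
          _ = _ := mul_one _

lemma specNorm_nonneg' {ι κ : Type*} [Fintype ι] [Fintype κ] (M : Matrix ι κ ℝ) :
    0 ≤ specNorm M :=
  le_csSup (specNorm_bddAbove' M) (specNorm_mem_zero' M)

lemma specNorm_le' {ι κ : Type*} [Fintype ι] [Fintype κ] (M : Matrix ι κ ℝ) {a : ℝ}
    (h : ∀ v : κ → ℝ, vnorm v ≤ 1 → vnorm (M.mulVec v) ≤ a) : specNorm M ≤ a := by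
  refine csSup_le ⟨0, specNorm_mem_zero' M⟩ ?_
  rintro r ⟨v, hv, rfl⟩
  exact h v hv

lemma vnorm_mulVec_le' {ι κ : Type*} [Fintype ι] [Fintype κ] (M : Matrix ι κ ℝ) (v : κ → ℝ) :
    vnorm (M.mulVec v) ≤ specNorm M * vnorm v := by
  rcases eq_or_lt_of_le (vnorm_nonneg' v) with h | h
  · rw [vnorm_eq_zero' h.symm]
    simp [vnorm_zero', Matrix.mulVec_zero]
  · have h1 : vnorm ((vnorm v)⁻¹ • v) = 1 := by
      rw [vnorm_smul', abs_of_pos (inv_pos.mpr h), inv_mul_cancel₀ h.ne']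
    have h2 : vnorm (M.mulVec ((vnorm v)⁻¹ • v)) ≤ specNorm M :=
      le_csSup (specNorm_bddAbove' M) ⟨_, h1.le, rfl⟩
    rw [Matrix.mulVec_smul, vnorm_smul', abs_of_pos (inv_pos.mpr h)] at h2
    calc vnorm (M.mulVec v) = vnorm v * ((vnorm v)⁻¹ * vnorm (M.mulVec v)) := by
          field_simp
      _ ≤ vnorm v * specNorm M := mul_le_mul_of_nonneg_left h2 (vnorm_nonneg' v)
      _ = specNorm M * vnorm v := mul_comm _ _

lemma vnorm_sq' {ι : Type*} [Fintype ι] (v : ι → ℝ) :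
    vnorm v ^ 2 = dotProduct v v := by
  rw [vnorm, Real.sq_sqrt (Finset.sum_nonneg fun i _ => sq_nonneg _)]
  simp [dotProduct, sq]

lemma specNorm_transpose_le' {ι κ : Type*} [Fintype ι] [Fintype κ] (M : Matrix ι κ ℝ) :
    specNorm Mᵀ ≤ specNorm M := by
  refine specNorm_le' _ fun v hv => ?_
  set w := Mᵀ.mulVec v with hw
  have key : vnorm w ^ 2 ≤ specNorm M * vnorm w := by
    have h1 : vnorm w ^ 2 = dotProduct v (M.mulVec w) := by
      rw [vnorm_sq', hw, Matrix.mulVec_transpose, ← Matrix.dotProduct_mulVec]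
    calc vnorm w ^ 2 = dotProduct v (M.mulVec w) := h1
      _ ≤ vnorm v * vnorm (M.mulVec w) := dot_le_vnorm' _ _
      _ ≤ 1 * (specNorm M * vnorm w) :=
          mul_le_mul hv (vnorm_mulVec_le' M w) (vnorm_nonneg' _)
            (le_trans (vnorm_nonneg' v) hv)
      _ = specNorm M * vnorm w := one_mul _
  rcases eq_or_lt_of_le (vnorm_nonneg' w) with h | h
  · rw [← h]; exact specNorm_nonneg' M
  · rw [sq] at key
    exact le_of_mul_le_mul_right (by linarith [key]) h

lemma specNorm_transpose' {ι κ : Type*} [Fintype ι] [Fintype κ] (M : Matrix ι κ ℝ) :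
    specNorm Mᵀ = specNorm M := by
  refine le_antisymm (specNorm_transpose_le' M) ?_
  have := specNorm_transpose_le' Mᵀ
  rwa [Matrix.transpose_transpose] at this

lemma colSum' {n p : ℕ} (Q : Matrix (Fin p × Fin n) (Fin p × Fin n) ℝ)
    (z : Fin p × Fin n → ℝ) :
    ∑ j, (colBlock Q j).mulVec (fun c => z (j, c)) = Q.mulVec z := by
  funext r
  simp only [Finset.sum_apply, Matrix.mulVec, dotProduct, colBlock, Matrix.of_apply]
  exact (Fintype.sum_prod_type (fun x => Q r x * z x)).symm

lemma rowDecomp' {n p : ℕ} (P : Matrix (Fin p × Fin n) (Fin n) ℝ)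
    (w : Fin p × Fin n → ℝ) :
    Pᵀ.mulVec w = ∑ l, (rowBlock P l)ᵀ.mulVec (fun c => w (l, c)) := by
  funext c
  simp only [Finset.sum_apply, Matrix.mulVec, dotProduct, rowBlock,
    Matrix.transpose_apply, Matrix.of_apply]
  rw [Fintype.sum_prod_type]

lemma blockDecomp' {n p : ℕ} (Q : Matrix (Fin p × Fin n) (Fin p × Fin n) ℝ)
    (P : Matrix (Fin p × Fin n) (Fin n) ℝ) (z : Fin p × Fin n → ℝ) (i : Fin p) :
    (fun c => z (i, c)) =
      (∑ j, (deltaId n i j - Pᵀ * colBlock Q j).mulVec (fun c => z (j, c)))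
        + Pᵀ.mulVec (Q.mulVec z) := by
  have h1 : ∀ j, (deltaId n i j - Pᵀ * colBlock Q j).mulVec (fun c => z (j, c)) =
      (deltaId n i j).mulVec (fun c => z (j, c))
        - (Pᵀ * colBlock Q j).mulVec (fun c => z (j, c)) := fun j =>
    Matrix.sub_mulVec _ _ _
  simp only [h1, Finset.sum_sub_distrib]
  have h2 : ∑ j, (deltaId n i j).mulVec (fun c => z (j, c)) = fun c => z (i, c) := by
    have : ∀ j, (deltaId n i j).mulVec (fun c => z (j, c)) =
        if i = j then (fun c => z (j, c)) else 0 := by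
      intro j
      by_cases h : i = j <;> simp [deltaId, h]
    rw [Finset.sum_congr rfl fun j _ => this j]
    simp
  have h3 : ∑ j, (Pᵀ * colBlock Q j).mulVec (fun c => z (j, c)) =
      Pᵀ.mulVec (Q.mulVec z) := by
    rw [← colSum' Q z]
    rw [show Pᵀ.mulVec (∑ j, (colBlock Q j).mulVec (fun c => z (j, c))) =
        ∑ j, Pᵀ.mulVec ((colBlock Q j).mulVec (fun c => z (j, c))) from
      map_sum (Matrix.mulVecLin Pᵀ) _ _]
    exact Finset.sum_congr rfl fun j _ => (Matrix.mulVec_mulVec ..).symm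
  rw [h2, h3]
  abel

lemma key_bound' {m n p : ℕ} (A : Matrix (Fin m) (Fin p × Fin n) ℝ) (se : ℝ) (hse : 0 ≤ se)
    (z : Fin p × Fin n → ℝ) (hz1 : blinf ((Aᵀ * A).mulVec z) ≤ 1) (hz2 : bl1 z ≤ se)
    (i : Fin p) (P : Matrix (Fin p × Fin n) (Fin n) ℝ) :
    bnorm z i ≤ se * (⨆ j, specNorm (deltaId n i j - Pᵀ * colBlock (Aᵀ * A) j)) +
      ∑ l, specNorm (rowBlock P l) := by
  haveI : Nonempty (Fin p) := ⟨i⟩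
  set Q := Aᵀ * A with hQ
  set w := Q.mulVec z with hwdef
  set Sm := ⨆ j, specNorm (deltaId n i j - Pᵀ * colBlock Q j) with hSm
  have hSm_le : ∀ j, specNorm (deltaId n i j - Pᵀ * colBlock Q j) ≤ Sm := fun j =>
    le_ciSup (f := fun j => specNorm (deltaId n i j - Pᵀ * colBlock Q j))
      (Set.Finite.bddAbove (Set.finite_range _)) j
  have hSm0 : 0 ≤ Sm := le_trans (specNorm_nonneg' _) (hSm_le i)
  have hwb : ∀ l, bnorm w l ≤ 1 := fun l =>
    le_trans (le_ciSup (Set.Finite.bddAbove (Set.finite_range _)) l) hz1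
  have step : bnorm z i ≤ Sm * bl1 z + ∑ l, specNorm (rowBlock P l) := by
    calc bnorm z i
        = vnorm ((∑ j, (deltaId n i j - Pᵀ * colBlock Q j).mulVec (fun c => z (j, c)))
            + Pᵀ.mulVec w) := by rw [bnorm, blockDecomp' Q P z i]
      _ ≤ vnorm (∑ j, (deltaId n i j - Pᵀ * colBlock Q j).mulVec (fun c => z (j, c)))
            + vnorm (Pᵀ.mulVec w) := vnorm_add_le' _ _
      _ ≤ (∑ j, vnorm ((deltaId n i j - Pᵀ * colBlock Q j).mulVec (fun c => z (j, c))))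
            + vnorm (Pᵀ.mulVec w) := add_le_add_left (vnorm_sum_le' _) _
      _ ≤ (∑ j, Sm * bnorm z j) + ∑ l, specNorm (rowBlock P l) := by
          refine add_le_add (Finset.sum_le_sum fun j _ => ?_) ?_
          · calc vnorm ((deltaId n i j - Pᵀ * colBlock Q j).mulVec (fun c => z (j, c)))
                ≤ specNorm (deltaId n i j - Pᵀ * colBlock Q j)
                    * vnorm (fun c => z (j, c)) := vnorm_mulVec_le' _ _
              _ ≤ Sm * bnorm z j :=
                  mul_le_mul_of_nonneg_right (hSm_le j) (vnorm_nonneg' _)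
          · rw [rowDecomp' P w]
            calc vnorm (∑ l, (rowBlock P l)ᵀ.mulVec (fun c => w (l, c)))
                ≤ ∑ l, vnorm ((rowBlock P l)ᵀ.mulVec (fun c => w (l, c))) := vnorm_sum_le' _
              _ ≤ ∑ l, specNorm (rowBlock P l) := by
                  refine Finset.sum_le_sum fun l _ => ?_
                  calc vnorm ((rowBlock P l)ᵀ.mulVec (fun c => w (l, c)))
                      ≤ specNorm ((rowBlock P l)ᵀ) * vnorm (fun c => w (l, c)) :=
                        vnorm_mulVec_le' _ _
                    _ = specNorm (rowBlock P l) * bnorm w l := by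
                        rw [specNorm_transpose']; rfl
                    _ ≤ specNorm (rowBlock P l) * 1 :=
                        mul_le_mul_of_nonneg_left (hwb l) (specNorm_nonneg' _)
                    _ = specNorm (rowBlock P l) := mul_one _
      _ = Sm * bl1 z + ∑ l, specNorm (rowBlock P l) := by rw [← Finset.mul_sum]; rfl
  calc bnorm z i ≤ Sm * bl1 z + ∑ l, specNorm (rowBlock P l) := step
    _ ≤ Sm * se + ∑ l, specNorm (rowBlock P l) :=
        add_le_add_left (mul_le_mul_of_nonneg_left hz2 hSm0) _
    _ = se * Sm + ∑ l, specNorm (rowBlock P l) := by rw [mul_comm]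

end AuxLemmas

/-- Proposition 4, case `Q = AᵀA`, `⋄ = b∞`: if `‖AᵀAz‖_{b∞} ≤ 1` and
`‖z‖_{b1} ≤ sη`, then for every `i` and every `P_i ∈ ℝ^{np×n}` with row blocks `P_i^l`,
`‖z_i‖₂ ≤ sη max_j ‖δ_{ij} Iₙ - P_iᵀ Q_j‖₂ + ∑ l ‖P_i^l‖₂`; consequently
`f_s(η) ≤ max_i inf_{P_i} (sη max_j ‖δ_{ij} Iₙ - P_iᵀ Q_j‖₂ + ∑ l ‖P_i^l‖₂)`. -/


theorem stmt17 {m n p : ℕ} (A : Matrix (Fin m) (Fin p × Fin n) ℝ) (s η : ℝ)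
    (hs : 1 ≤ s) (hη : 0 ≤ η)
    (z : Fin p × Fin n → ℝ)
    (hz1 : blinf ((Aᵀ * A).mulVec z) ≤ 1) (hz2 : bl1 z ≤ s * η) :
    (∀ (i : Fin p) (P : Matrix (Fin p × Fin n) (Fin n) ℝ),
      bnorm z i ≤
        s * η * (⨆ j : Fin p, specNorm (deltaId n i j - Pᵀ * colBlock (Aᵀ * A) j)) +
          ∑ l : Fin p, specNorm (rowBlock P l)) ∧
    sSup {r | ∃ z' : Fin p × Fin n → ℝ,
        blinf ((Aᵀ * A).mulVec z') ≤ 1 ∧ bl1 z' ≤ s * η ∧ r = blinf z'} ≤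
      ⨆ i : Fin p, sInf {r | ∃ P : Matrix (Fin p × Fin n) (Fin n) ℝ,
        r = s * η * (⨆ j : Fin p, specNorm (deltaId n i j - Pᵀ * colBlock (Aᵀ * A) j)) +
          ∑ l : Fin p, specNorm (rowBlock P l)} := by
  have hse : 0 ≤ s * η := mul_nonneg (le_trans zero_le_one hs) hη
  refine ⟨fun i P => key_bound' A (s * η) hse z hz1 hz2 i P, ?_⟩
  by_cases hp : Nonempty (Fin p)
  · refine Real.sSup_le ?_ ?_
    · rintro r ⟨z', h1', h2', rfl⟩
      refine ciSup_le fun i => ?_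
      refine le_trans ?_ (le_ciSup (Set.Finite.bddAbove (Set.finite_range _)) i)
      refine le_csInf ⟨_, 0, rfl⟩ ?_
      rintro r ⟨P, rfl⟩
      exact key_bound' A (s * η) hse z' h1' h2' i P
    · obtain ⟨i⟩ := hp
      refine le_trans ?_ (le_ciSup (Set.Finite.bddAbove (Set.finite_range _)) i)
      refine le_csInf ⟨_, 0, rfl⟩ ?_
      rintro r ⟨P, rfl⟩
      have hSm0 : 0 ≤ ⨆ j, specNorm (deltaId n i j - Pᵀ * colBlock (Aᵀ * A) j) :=
        le_trans (specNorm_nonneg' _)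
          (le_ciSup (f := fun j => specNorm (deltaId n i j - Pᵀ * colBlock (Aᵀ * A) j))
            (Set.Finite.bddAbove (Set.finite_range _)) i)
      have := Finset.sum_nonneg (fun l (_ : l ∈ Finset.univ) =>
        specNorm_nonneg' (rowBlock P l))
      positivity
  · haveI := not_nonempty_iff.mp hp
    refine Real.sSup_le ?_ ?_
    · rintro r ⟨z', _, _, rfl⟩
      rw [blinf, iSup, iSup, Set.range_eq_empty, Set.range_eq_empty, Real.sSup_empty]
    · rw [iSup, Set.range_eq_empty, Real.sSup_empty]
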